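/- In any algebra satisfying Σ, for all p, q: p·(q∘a) = ((p∘q)·a) ∘ (p·q). -/
import Mathlib

/-- In any algebra satisfying Σ: p·(q∘a) = ((p∘q)·a) ∘ (p·q). -/
theorem sigma_mul_comp_eq {P : Type*} (mul comp : P → P → P)
    (hassoc : ∀ a b c, comp a (comp b c) = comp (comp a b) c)
    (hmix : ∀ a b c, mul (comp a b) c = mul a (mul b c))
    (hdist : ∀ a b c, mul a (comp b c) = comp (mul a b) (mul a c))
    (habs : ∀ a b, comp a b = comp (mul a b) a) :
    ∀ p q a, mul p (comp q a) = comp (mul (comp p q) a) (mul p q) := by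
  intro p q a
  rw [habs q a, hdist, ← hmix]
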